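/- Let 2 < p < 5, a > 0, c > 0 and b ∈ ℝ. Define h : [0,∞) → ℝ by h(t) = a·t + b·t³ − c·t^{2p−1}. Then h has exactly one critical point in (0,∞), and this critical point is a strict global maximum of h on [0,∞). -/

import Mathlib

open Real Set

theorem stmt_1 (p a b c : ℝ) (hp1 : 2 < p) (hp2 : p < 5) (ha : 0 < a) (hc : 0 < c)
    (h : ℝ → ℝ) (hh : ∀ t, h t = a * t + b * t ^ 3 - c * t ^ (2 * p - 1)) :
    ∃ t₀ : ℝ, 0 < t₀ ∧ deriv h t₀ = 0 ∧
      (∀ t : ℝ, 0 < t → deriv h t = 0 → t = t₀) ∧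
      (∀ t : ℝ, 0 ≤ t → t ≠ t₀ → h t < h t₀) := by
  have hfun : h = fun t => a * t + b * t ^ 3 - c * t ^ (2 * p - 1) := funext hh
  subst hfun
  set d : ℝ := c * (2 * p - 1) with hd
  have hdpos : 0 < d := by
    have : 0 < 2 * p - 1 := by linarith
    positivity
  set F : ℝ → ℝ := fun u => a / u + 3 * b - d * u ^ (p - 2) with hF
  have hq : (0:ℝ) < p - 2 := by linarith
  -- F is strictly antitone on (0, ∞)
  have hanti : StrictAntiOn F (Ioi (0:ℝ)) := by
    intro x hx y hy hxy
    simp only [mem_Ioi] at hx hy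
    have h1 : a / y < a / x := div_lt_div_of_pos_left ha hx hxy
    have h2 : x ^ (p - 2) < y ^ (p - 2) := Real.rpow_lt_rpow hx.le hxy hq
    have h3 : d * x ^ (p - 2) < d * y ^ (p - 2) := by
      exact (mul_lt_mul_iff_right₀ hdpos).2 h2
    simp only [hF]
    linarith
  -- existence of a zero of F
  obtain ⟨u₀, hu₀mem, hFu₀⟩ : ∃ u₀ > 0, F u₀ = 0 := by
    set K : ℝ := |3 * b| + d + 1 with hK
    have hKpos : 0 < K := by positivity
    set u₁ : ℝ := min 1 (a / K) with hu₁
    set u₂ : ℝ := max 1 (((a + |3 * b| + 1) / d) ^ (1 / (p - 2))) with hu₂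
    have hu₁pos : 0 < u₁ := lt_min one_pos (by positivity)
    have hu₁le1 : u₁ ≤ 1 := min_le_left _ _
    have h1leu₂ : (1:ℝ) ≤ u₂ := le_max_left _ _
    have hu₁le : u₁ ≤ u₂ := hu₁le1.trans h1leu₂
    have hF₁ : 0 < F u₁ := by
      have h1 : u₁ ^ (p - 2) ≤ 1 := Real.rpow_le_one hu₁pos.le hu₁le1 hq.le
      have h2 : K ≤ a / u₁ := by
        rw [le_div_iff₀ hu₁pos]
        calc K * u₁ ≤ K * (a / K) := by
              exact mul_le_mul_of_nonneg_left (min_le_right _ _) hKpos.le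
          _ = a := by field_simp
      have h3 : d * u₁ ^ (p - 2) ≤ d := by
        calc d * u₁ ^ (p - 2) ≤ d * 1 := (mul_le_mul_iff_right₀ hdpos).2 h1
          _ = d := mul_one d
      have habs : -(3 * b) ≤ |3 * b| := neg_le_abs _
      simp only [hF]
      have : |3*b| + d + 1 ≤ a / u₁ := h2
      linarith
    have hF₂ : F u₂ < 0 := by
      set M : ℝ := (a + |3 * b| + 1) / d with hM
      have hMpos : 0 < M := by positivity
      have hMu : M ≤ u₂ ^ (p - 2) := by
        have h0 : (0:ℝ) ≤ M ^ (1 / (p - 2)) := Real.rpow_nonneg hMpos.le _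
        have h1 : M ^ (1 / (p - 2)) ≤ u₂ := le_max_right _ _
        calc M = (M ^ (1 / (p - 2))) ^ (p - 2) := by
              rw [← Real.rpow_mul hMpos.le, one_div, inv_mul_cancel₀ hq.ne',
                Real.rpow_one]
          _ ≤ u₂ ^ (p - 2) := Real.rpow_le_rpow h0 h1 hq.le
      have h2 : a + |3 * b| + 1 ≤ d * u₂ ^ (p - 2) := by
        have := (mul_le_mul_iff_right₀ hdpos).2 hMu
        rwa [hM, mul_div_cancel₀ _ hdpos.ne'] at this
      have h3 : a / u₂ ≤ a := by
        rw [div_le_iff₀ (by linarith : (0:ℝ) < u₂)]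
        nlinarith
      have habs : 3 * b ≤ |3 * b| := le_abs_self _
      simp only [hF]
      linarith
    have hcont : ContinuousOn F (Icc u₁ u₂) := by
      apply ContinuousOn.sub
      · apply ContinuousOn.add
        · exact continuousOn_const.div continuousOn_id
            (fun x hx => (lt_of_lt_of_le hu₁pos hx.1).ne')
        · exact continuousOn_const
      · exact continuousOn_const.mul
          ((Real.continuous_rpow_const hq.le).continuousOn)
    have h0mem : (0:ℝ) ∈ Icc (F u₂) (F u₁) := ⟨hF₂.le, hF₁.le⟩
    obtain ⟨u₀, hu₀, hFu₀⟩ := intermediate_value_Icc' hu₁le hcont h0mem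
    exact ⟨u₀, lt_of_lt_of_le hu₁pos hu₀.1, hFu₀⟩
  set t₀ : ℝ := Real.sqrt u₀ with ht₀
  have ht₀pos : 0 < t₀ := Real.sqrt_pos.2 hu₀mem
  have ht₀sq : t₀ ^ 2 = u₀ := Real.sq_sqrt hu₀mem.le
  -- derivative formula
  have hderiv : ∀ t : ℝ, 0 < t →
      deriv (fun t => a * t + b * t ^ 3 - c * t ^ (2 * p - 1)) t = t ^ 2 * F (t ^ 2) := by
    intro t ht
    have h1 : HasDerivAt (fun t : ℝ => a * t + b * t ^ 3 - c * t ^ (2 * p - 1))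
        (a * 1 + b * (3 * t ^ 2) - c * ((2 * p - 1) * t ^ (2 * p - 1 - 1))) t := by
      refine HasDerivAt.sub (HasDerivAt.add ((hasDerivAt_id t).const_mul a) ?_)
        ((Real.hasDerivAt_rpow_const (Or.inl ht.ne')).const_mul c)
      have := (hasDerivAt_pow 3 t).const_mul b
      simpa using this
    rw [h1.deriv]
    have hexp : t ^ 2 * (t ^ 2 : ℝ) ^ (p - 2) = t ^ (2 * p - 2) := by
      rw [← Real.rpow_natCast t 2, ← Real.rpow_mul ht.le, ← Real.rpow_add ht]
      congr 1
      push_cast; ring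
    have ht2 : (0:ℝ) < t ^ 2 := pow_pos ht 2
    have hFt : t ^ 2 * F (t ^ 2) =
        a + 3 * b * t ^ 2 - d * (t ^ 2 * (t ^ 2 : ℝ) ^ (p - 2)) := by
      simp only [hF]
      field_simp
    rw [hFt, hexp, hd]
    have : (2 : ℝ) * p - 1 - 1 = 2 * p - 2 := by ring
    rw [this]
    ring
  refine ⟨t₀, ht₀pos, ?_, ?_, ?_⟩
  · rw [hderiv t₀ ht₀pos, ht₀sq, hFu₀, mul_zero]
  · intro t ht hdt
    rw [hderiv t ht] at hdt
    have ht2 : (0:ℝ) < t ^ 2 := pow_pos ht 2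
    have hFt : F (t ^ 2) = 0 := by
      rcases mul_eq_zero.1 hdt with h' | h'
      · exact absurd h' ht2.ne'
      · exact h'
    have : t ^ 2 = u₀ := hanti.injOn (mem_Ioi.2 ht2) (mem_Ioi.2 hu₀mem)
      (by rw [hFt, hFu₀])
    calc t = Real.sqrt (t ^ 2) := (Real.sqrt_sq ht.le).symm
      _ = Real.sqrt u₀ := by rw [this]
      _ = t₀ := rfl
  · -- strict global max
    have hcont : Continuous (fun t : ℝ => a * t + b * t ^ 3 - c * t ^ (2 * p - 1)) := by
      apply Continuous.sub
      · exact (continuous_const.mul continuous_id).add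
          (continuous_const.mul (continuous_pow 3))
      · exact continuous_const.mul (Real.continuous_rpow_const (by linarith))
    have hmono : StrictMonoOn (fun t : ℝ => a * t + b * t ^ 3 - c * t ^ (2 * p - 1))
        (Icc 0 t₀) := by
      apply strictMonoOn_of_deriv_pos (convex_Icc 0 t₀) hcont.continuousOn
      intro x hx
      rw [interior_Icc, mem_Ioo] at hx
      rw [hderiv x hx.1]
      have hx2 : (0:ℝ) < x ^ 2 := pow_pos hx.1 2
      have hlt : x ^ 2 < u₀ := by
        rw [← ht₀sq]
        exact pow_lt_pow_left₀ hx.2 hx.1.le (by norm_num)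
      have : F u₀ < F (x ^ 2) := hanti (mem_Ioi.2 hx2) (mem_Ioi.2 hu₀mem) hlt
      rw [hFu₀] at this
      exact mul_pos hx2 this
    have hantiH : StrictAntiOn (fun t : ℝ => a * t + b * t ^ 3 - c * t ^ (2 * p - 1))
        (Ici t₀) := by
      apply strictAntiOn_of_deriv_neg (convex_Ici t₀) hcont.continuousOn
      intro x hx
      rw [interior_Ici, mem_Ioi] at hx
      have hxpos : 0 < x := ht₀pos.trans hx
      rw [hderiv x hxpos]
      have hx2 : (0:ℝ) < x ^ 2 := pow_pos hxpos 2
      have hgt : u₀ < x ^ 2 := by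
        rw [← ht₀sq]
        exact pow_lt_pow_left₀ hx ht₀pos.le (by norm_num)
      have : F (x ^ 2) < F u₀ := hanti (mem_Ioi.2 hu₀mem) (mem_Ioi.2 hx2) hgt
      rw [hFu₀] at this
      exact mul_neg_of_pos_of_neg hx2 this
    intro t ht htne
    rcases lt_or_gt_of_ne htne with hlt | hgt
    · exact hmono ⟨ht, hlt.le⟩ ⟨ht₀pos.le, le_refl _⟩ hlt
    · exact hantiH (self_mem_Ici) (mem_Ici.2 hgt.le) hgt
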